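/- The five vectors |0⟩(|0⟩−|1⟩), (|0⟩−|1⟩)|2⟩, |2⟩(|1⟩−|2⟩), (|1⟩−|2⟩)|0⟩, (|0⟩+|1⟩+|2⟩)(|0⟩+|1⟩+|2⟩) form an unextendible product basis in ℂ^3 ⊗ ℂ^3: they are pairwise orthogonal product states, and no nonzero product state u⊗v is orthogonal to all five. -/

import Mathlib

set_option maxRecDepth 8000
set_option maxHeartbeats 1000000

noncomputable section

def ket (i : Fin 3) : Fin 3 → ℂ := fun j => if j = i then 1 else 0

/-- The A-parts of the Tiles UPB in ℂ³⊗ℂ³. -/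
def tA : Fin 5 → (Fin 3 → ℂ)
  | 0 => ket 0
  | 1 => ket 0 - ket 1
  | 2 => ket 2
  | 3 => ket 1 - ket 2
  | 4 => ket 0 + ket 1 + ket 2

/-- The B-parts of the Tiles UPB in ℂ³⊗ℂ³. -/
def tB : Fin 5 → (Fin 3 → ℂ)
  | 0 => ket 0 - ket 1
  | 1 => ket 2
  | 2 => ket 1 - ket 2
  | 3 => ket 0
  | 4 => ket 0 + ket 1 + ket 2

/-- The Tiles UPB in ℂ³⊗ℂ³. -/
def tiles : Fin 5 → (Fin 3 × Fin 3 → ℂ) := fun k x => tA k x.1 * tB k x.2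

/-- The five Tiles vectors form a UPB in ℂ³⊗ℂ³: they are pairwise orthogonal
nonzero product states, and no nonzero product state is orthogonal to all five. -/
theorem stmt_11 :
    (∀ k, tiles k ≠ 0) ∧
    (∀ k, ∃ u v : Fin 3 → ℂ, tiles k = fun x => u x.1 * v x.2) ∧
    (∀ k l, k ≠ l → ∑ x : Fin 3 × Fin 3, (starRingEnd ℂ) (tiles k x) * tiles l x = 0) ∧
    (∀ u v : Fin 3 → ℂ,
      (∀ k, ∑ x : Fin 3 × Fin 3, (starRingEnd ℂ) (tiles k x) * (u x.1 * v x.2) = 0) →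
      (fun x : Fin 3 × Fin 3 => u x.1 * v x.2) = 0) := by

  refine ⟨?_, ?_, ?_, ?_⟩
  · intro k
    fin_cases k
    · exact fun h => by simpa [tiles, tA, tB, ket] using congrFun h (0, 0)
    · exact fun h => by simpa [tiles, tA, tB, ket] using congrFun h (0, 2)
    · exact fun h => by simpa [tiles, tA, tB, ket] using congrFun h (2, 1)
    · exact fun h => by simpa [tiles, tA, tB, ket] using congrFun h (1, 0)
    · exact fun h => by simpa [tiles, tA, tB, ket] using congrFun h (0, 0)
  · exact fun k => ⟨tA k, tB k, rfl⟩
  · intro k l hkl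
    fin_cases k <;> fin_cases l <;>
      first
        | exact absurd rfl hkl
        | (simp [tiles, tA, tB, ket, Fintype.sum_prod_type, Fin.sum_univ_succ]; try ring)
  · intro u v h
    have h0 := h 0
    have h1 := h 1
    have h2 := h 2
    have h3 := h 3
    have h4 := h 4
    simp [tiles, tA, tB, ket, Fintype.sum_prod_type, Fin.sum_univ_succ]
      at h0 h1 h2 h3 h4
    have p00 : u 0 * v 0 = 0 := by
      have hc : (u 0 * v 0) ^ 3 = 0 := by linear_combination ((-35/18 : ℂ) * u 2 * u 2 * v 2 * v 2 + (35/18 : ℂ) * u 2 * u 2 * v 1 * v 2 + (7/6 : ℂ) * u 2 * u 2 * v 0 * v 2 + (7/2 : ℂ) * u 1 * u 2 * v 2 * v 2 + (-1 : ℂ) * u 1 * u 2 * v 1 * v 2 + u 1 * u 1 * v 1 * v 2 + (-3/2 : ℂ) * u 0 * u 2 * v 1 * v 1 + (1/2 : ℂ) * u 0 * u 1 * v 1 * v 1 + (1/2 : ℂ) * u 0 * u 0 * v 1 * v 1 + u 0 * u 0 * v 0 * v 1 + u 0 * u 0 * v 0 * v 0) * h0 + ((-35/18 : ℂ) * u 2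 * u 2 * v 1 * v 2 + (35/18 : ℂ) * u 2 * u 2 * v 1 * v 1 + (7/3 : ℂ) * u 2 * u 2 * v 0 * v 2 + (-7/18 : ℂ) * u 2 * u 2 * v 0 * v 1 + (-7/9 : ℂ) * u 2 * u 2 * v 0 * v 0 + (7/2 : ℂ) * u 1 * u 2 * v 1 * v 2 + (-7/2 : ℂ) * u 1 * u 2 * v 1 * v 1 + (-7/2 : ℂ) * u 1 * u 2 * v 0 * v 2 + u 1 * u 2 * v 0 * v 1 + (-1 : ℂ) * u 1 * u 1 * v 0 * v 1 + (-5/2 : ℂ) * u 0 * u 2 * v 1 * v 1 + (-1 : ℂ) * u 0 * u 1 * v 1 * v 1 + (-1/2 : ℂ) * u 0 * u 0 * v 1 * v 1) * h1 + ((7/18 : ℂ) * u 2 * u 2 * v 0 * v 2 + (35/18 : ℂ) * u 1 * u 2 * v 1 * v 2 + (-7/2 : ℂ) * u 1 * u 1 * v 1 * v 2 + (-2 : ℂ) * u 0 * u 0 * v 1 * v 1) * h2 + ((-7/9 : ℂ) * u 2 * u 2 * v 2 * v 2 + (-7/18 : ℂ) * u 2 * u 2 * v 0 * v 2 + (-7/2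 : ℂ) * u 1 * u 2 * v 2 * v 2 + (-1 : ℂ) * u 1 * u 1 * v 1 * v 2 + (-1 : ℂ) * u 0 * u 0 * v 1 * v 1) * h3 + ((-7/18 : ℂ) * u 2 * u 2 * v 0 * v 2 + (1/2 : ℂ) * u 0 * u 0 * v 1 * v 1) * h4
      exact pow_eq_zero_iff (by norm_num : (3:ℕ) ≠ 0) |>.mp hc
    have p01 : u 0 * v 1 = 0 := by
      have hc : (u 0 * v 1) ^ 3 = 0 := by linear_combination ((-35/18 : ℂ) * u 2 * u 2 * v 2 * v 2 + (35/18 : ℂ) * u 2 * u 2 * v 1 * v 2 + (7/6 : ℂ) * u 2 * u 2 * v 0 * v 2 + (7/2 : ℂ) * u 1 * u 2 * v 2 * v 2 + (-1 : ℂ) * u 1 * u 2 * v 1 * v 2 + u 1 * u 1 * v 1 * v 2 + (-3/2 : ℂ) * u 0 * u 2 * v 1 * v 1 + (1/2 : ℂ) * u 0 * u 1 * v 1 * v 1 + (-1/2 : ℂ) * u 0 * u 0 * v 1 * v 1) * h0 + ((-35/18 : ℂ) * u 2 * u 2 * v 1 * v 2 + (35/18 : ℂ) * u 2 * u 2 *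 v 1 * v 1 + (7/3 : ℂ) * u 2 * u 2 * v 0 * v 2 + (-7/18 : ℂ) * u 2 * u 2 * v 0 * v 1 + (-7/9 : ℂ) * u 2 * u 2 * v 0 * v 0 + (7/2 : ℂ) * u 1 * u 2 * v 1 * v 2 + (-7/2 : ℂ) * u 1 * u 2 * v 1 * v 1 + (-7/2 : ℂ) * u 1 * u 2 * v 0 * v 2 + u 1 * u 2 * v 0 * v 1 + (-1 : ℂ) * u 1 * u 1 * v 0 * v 1 + (-5/2 : ℂ) * u 0 * u 2 * v 1 * v 1 + (-1 : ℂ) * u 0 * u 1 * v 1 * v 1 + (-1/2 : ℂ) * u 0 * u 0 * v 1 * v 1) * h1 + ((7/18 : ℂ) * u 2 * u 2 * v 0 * v 2 + (35/18 : ℂ) * u 1 * u 2 * v 1 * v 2 + (-7/2 : ℂ) * u 1 * u 1 * v 1 * v 2 + (-2 : ℂ) * u 0 * u 0 * v 1 * v 1) * h2 + ((-7/9 : ℂ) * u 2 * u 2 * v 2 * v 2 + (-7/18 : ℂ) * u 2 * u 2 * v 0 * v 2 + (-7/2 : ℂ) * u 1 * u 2 * v 2 * v 2 + (-1 : ℂ)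 * u 1 * u 1 * v 1 * v 2 + (-1 : ℂ) * u 0 * u 0 * v 1 * v 1) * h3 + ((-7/18 : ℂ) * u 2 * u 2 * v 0 * v 2 + (1/2 : ℂ) * u 0 * u 0 * v 1 * v 1) * h4
      exact pow_eq_zero_iff (by norm_num : (3:ℕ) ≠ 0) |>.mp hc
    have p02 : u 0 * v 2 = 0 := by
      have hc : (u 0 * v 2) ^ 3 = 0 := by linear_combination ((-35/18 : ℂ) * u 2 * u 2 * v 2 * v 2 + (35/18 : ℂ) * u 2 * u 2 * v 1 * v 2 + (7/6 : ℂ) * u 2 * u 2 * v 0 * v 2 + u 1 * u 2 * v 2 * v 2 + u 1 * u 1 * v 2 * v 2) * h0 + ((-35/18 : ℂ) * u 2 * u 2 * v 1 * v 2 + (35/18 : ℂ) * u 2 * u 2 * v 1 * v 1 + (7/3 : ℂ) * u 2 * u 2 * v 0 * v 2 + (-7/18 : ℂ) * u 2 * u 2 * v 0 * v 1 + (-7/9 : ℂ) * u 2 * u 2 * v 0 * v 0 + u 1 * u 2 * v 1 * v 2 + (-1 : ℂ) * u 1 * u 2 * v 0 * v 2 + (1/2 : ℂ) * u 1 * u 1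 * v 2 * v 2 + (1/2 : ℂ) * u 1 * u 1 * v 1 * v 2 + (-3/2 : ℂ) * u 1 * u 1 * v 0 * v 2 + u 0 * u 1 * v 2 * v 2 + u 0 * u 0 * v 2 * v 2) * h1 + ((7/18 : ℂ) * u 2 * u 2 * v 0 * v 2 + (35/18 : ℂ) * u 1 * u 2 * v 1 * v 2 + (1/2 : ℂ) * u 1 * u 1 * v 2 * v 2) * h2 + ((-7/9 : ℂ) * u 2 * u 2 * v 2 * v 2 + (-7/18 : ℂ) * u 2 * u 2 * v 0 * v 2 + (-7/2 : ℂ) * u 1 * u 2 * v 2 * v 2 + (-2 : ℂ) * u 1 * u 1 * v 2 * v 2) * h3 + ((-7/18 : ℂ) * u 2 * u 2 * v 0 * v 2 + (1/2 : ℂ) * u 1 * u 1 * v 2 * v 2) * h4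
      exact pow_eq_zero_iff (by norm_num : (3:ℕ) ≠ 0) |>.mp hc
    have p10 : u 1 * v 0 = 0 := by
      have hc : (u 1 * v 0) ^ 3 = 0 := by linear_combination ((14/9 : ℂ) * u 2 * u 2 * v 2 * v 2 + (-5/9 : ℂ) * u 2 * u 2 * v 1 * v 2 + (-1 : ℂ) * u 2 * u 2 * v 1 * v 1 + (-4/3 : ℂ) * u 2 * u 2 * v 0 * v 2 + (-1 : ℂ) * u 2 * u 2 * v 0 * v 1 + (-1/2 : ℂ) * u 2 * u 2 * v 0 * v 0) * h0 + ((14/9 : ℂ) * u 2 * u 2 * v 1 * v 2 + (-14/9 : ℂ) * u 2 * u 2 * v 1 * v 1 + (-7/6 : ℂ) * u 2 * u 2 * v 0 * v 2 + (-7/18 : ℂ) * u 2 * u 2 * v 0 * v 1 + (11/9 : ℂ) * u 2 * u 2 * v 0 * v 0) * h1 + ((7/18 : ℂ) * u 2 * u 2 * v 0 * v 2 + (-1/2 : ℂ) * u 2 * u 2 * v 0 * v 0 + (-14/9 : ℂ) * u 1 * u 2 * v 1 * v 2 + (-1/2 : ℂ) * u 1 * u 2 * v 0 * v 0 + (-1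 : ℂ) * u 0 * u 2 * v 1 * v 1) * h2 + ((-7/9 : ℂ) * u 2 * u 2 * v 2 * v 2 + (11/18 : ℂ) * u 2 * u 2 * v 0 * v 2 + (1/2 : ℂ) * u 2 * u 2 * v 0 * v 0 + u 1 * u 2 * v 0 * v 0 + u 1 * u 1 * v 0 * v 0) * h3 + ((-7/18 : ℂ) * u 2 * u 2 * v 0 * v 2 + (1/2 : ℂ) * u 2 * u 2 * v 0 * v 0) * h4
      exact pow_eq_zero_iff (by norm_num : (3:ℕ) ≠ 0) |>.mp hc
    have p11 : u 1 * v 1 = 0 := by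
      have hc : (u 1 * v 1) ^ 3 = 0 := by linear_combination ((-40/9 : ℂ) * u 2 * u 2 * v 2 * v 2 + (40/9 : ℂ) * u 2 * u 2 * v 1 * v 2 + (8/3 : ℂ) * u 2 * u 2 * v 0 * v 2 + (8 : ℂ) * u 1 * u 2 * v 2 * v 2 + (-4 : ℂ) * u 1 * u 2 * v 1 * v 2 + (-2 : ℂ) * u 1 * u 2 * v 1 * v 1 + (2 : ℂ) * u 1 * u 1 * v 1 * v 2 + u 1 * u 1 * v 1 * v 1) * h0 + ((-40/9 : ℂ) * u 2 * u 2 * v 1 * v 2 + (40/9 : ℂ) * u 2 * u 2 * v 1 * v 1 + (16/3 : ℂ) * u 2 * u 2 * v 0 * v 2 + (-8/9 : ℂ) * u 2 * u 2 * v 0 * v 1 + (-16/9 : ℂ) * u 2 * u 2 * v 0 * v 0 + (8 : ℂ) * u 1 * u 2 * v 1 * v 2 + (-6 : ℂ) * u 1 * u 2 * v 1 * v 1 + (-8 : ℂ) * u 1 * u 2 * v 0 * v 2 + (4 : ℂ) * u 1 * u 2 * v 0 * v 1 + u 1 * u 1 * v 1 * v 1 + (-2 : ℂ) * u 1 * u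 1 * v 0 * v 1) * h1 + ((8/9 : ℂ) * u 2 * u 2 * v 0 * v 2 + (40/9 : ℂ) * u 1 * u 2 * v 1 * v 2 + (-8 : ℂ) * u 1 * u 1 * v 1 * v 2 + (-1 : ℂ) * u 1 * u 1 * v 1 * v 1 + (-2 : ℂ) * u 1 * u 1 * v 0 * v 1 + (-2 : ℂ) * u 0 * u 1 * v 1 * v 1) * h2 + ((-16/9 : ℂ) * u 2 * u 2 * v 2 * v 2 + (-8/9 : ℂ) * u 2 * u 2 * v 0 * v 2 + (-8 : ℂ) * u 1 * u 2 * v 2 * v 2 + (-2 : ℂ) * u 1 * u 1 * v 1 * v 2 + (-1 : ℂ) * u 1 * u 1 * v 1 * v 1 + (-2 : ℂ) * u 0 * u 1 * v 1 * v 1) * h3 + ((-8/9 : ℂ) * u 2 * u 2 * v 0 * v 2 + u 1 * u 1 * v 1 * v 1) * h4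
      exact pow_eq_zero_iff (by norm_num : (3:ℕ) ≠ 0) |>.mp hc
    have p12 : u 1 * v 2 = 0 := by
      have hc : (u 1 * v 2) ^ 3 = 0 := by linear_combination ((-35/18 : ℂ) * u 2 * u 2 * v 2 * v 2 + (35/18 : ℂ) * u 2 * u 2 * v 1 * v 2 + (7/6 : ℂ) * u 2 * u 2 * v 0 * v 2 + u 1 * u 2 * v 2 * v 2 + u 1 * u 1 * v 2 * v 2) * h0 + ((-35/18 : ℂ) * u 2 * u 2 * v 1 * v 2 + (35/18 : ℂ) * u 2 * u 2 * v 1 * v 1 + (7/3 : ℂ) * u 2 * u 2 * v 0 * v 2 + (-7/18 : ℂ) * u 2 * u 2 * v 0 * v 1 + (-7/9 : ℂ) * u 2 * u 2 * v 0 * v 0 + u 1 * u 2 * v 1 * v 2 + (-1 : ℂ) * u 1 * u 2 * v 0 * v 2 + (-1/2 : ℂ) * u 1 * u 1 * v 2 * v 2 + (1/2 : ℂ) * u 1 * u 1 * v 1 * v 2 + (-3/2 : ℂ) * u 1 * u 1 * v 0 * v 2) * h1 + ((7/18 : ℂ) * u 2 * u 2 * v 0 * v 2 + (35/18 : ℂ)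 * u 1 * u 2 * v 1 * v 2 + (1/2 : ℂ) * u 1 * u 1 * v 2 * v 2) * h2 + ((-7/9 : ℂ) * u 2 * u 2 * v 2 * v 2 + (-7/18 : ℂ) * u 2 * u 2 * v 0 * v 2 + (-7/2 : ℂ) * u 1 * u 2 * v 2 * v 2 + (-2 : ℂ) * u 1 * u 1 * v 2 * v 2) * h3 + ((-7/18 : ℂ) * u 2 * u 2 * v 0 * v 2 + (1/2 : ℂ) * u 1 * u 1 * v 2 * v 2) * h4
      exact pow_eq_zero_iff (by norm_num : (3:ℕ) ≠ 0) |>.mp hc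
    have p20 : u 2 * v 0 = 0 := by
      have hc : (u 2 * v 0) ^ 3 = 0 := by linear_combination ((14/9 : ℂ) * u 2 * u 2 * v 2 * v 2 + (-5/9 : ℂ) * u 2 * u 2 * v 1 * v 2 + (-1 : ℂ) * u 2 * u 2 * v 1 * v 1 + (-4/3 : ℂ) * u 2 * u 2 * v 0 * v 2 + (-1 : ℂ) * u 2 * u 2 * v 0 * v 1 + (-1/2 : ℂ) * u 2 * u 2 * v 0 * v 0) * h0 + ((14/9 : ℂ) * u 2 * u 2 * v 1 * v 2 + (-14/9 : ℂ) * u 2 * u 2 * v 1 * v 1 + (-7/6 : ℂ) * u 2 * u 2 * v 0 * v 2 + (-7/18 : ℂ) * u 2 * u 2 * v 0 * v 1 + (11/9 : ℂ) * u 2 * u 2 * v 0 * v 0) * h1 + ((7/18 : ℂ) * u 2 * u 2 * v 0 * v 2 + (-1/2 : ℂ) * u 2 * u 2 * v 0 * v 0 + (-14/9 : ℂ) * u 1 * u 2 * v 1 * v 2 + (-1/2 : ℂ) * u 1 * u 2 * v 0 * v 0 + (-1 : ℂ) * u 0 * u 2 * v 1 * v 1) * h2 + ((-7/9 : ℂ)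 * u 2 * u 2 * v 2 * v 2 + (11/18 : ℂ) * u 2 * u 2 * v 0 * v 2 + (-1/2 : ℂ) * u 2 * u 2 * v 0 * v 0) * h3 + ((-7/18 : ℂ) * u 2 * u 2 * v 0 * v 2 + (1/2 : ℂ) * u 2 * u 2 * v 0 * v 0) * h4
      exact pow_eq_zero_iff (by norm_num : (3:ℕ) ≠ 0) |>.mp hc
    have p21 : u 2 * v 1 = 0 := by
      have hc : (u 2 * v 1) ^ 3 = 0 := by linear_combination ((1/18 : ℂ) * u 2 * u 2 * v 2 * v 2 + (35/18 : ℂ) * u 2 * u 2 * v 1 * v 2 + (7/6 : ℂ) * u 2 * u 2 * v 0 * v 2) * h0 + ((-1/2 : ℂ) * u 2 * u 2 * v 2 * v 2 + (-4/9 : ℂ) * u 2 * u 2 * v 1 * v 2 + (35/18 : ℂ) * u 2 * u 2 * v 1 * v 1 + (-1/6 : ℂ) * u 2 * u 2 * v 0 * v 2 + (-7/18 : ℂ) * u 2 * u 2 * v 0 * v 1 + (-7/9 : ℂ) * u 2 * u 2 * v 0 * v 0) * h1 + ((1/2 : ℂ) * u 2 * u 2 * v 2 * v 2 + u 2 * u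 2 * v 1 * v 2 + u 2 * u 2 * v 1 * v 1 + (7/18 : ℂ) * u 2 * u 2 * v 0 * v 2 + u 1 * u 2 * v 2 * v 2 + (35/18 : ℂ) * u 1 * u 2 * v 1 * v 2) * h2 + ((-5/18 : ℂ) * u 2 * u 2 * v 2 * v 2 + (-7/18 : ℂ) * u 2 * u 2 * v 0 * v 2) * h3 + ((1/2 : ℂ) * u 2 * u 2 * v 2 * v 2 + (-7/18 : ℂ) * u 2 * u 2 * v 0 * v 2) * h4
      exact pow_eq_zero_iff (by norm_num : (3:ℕ) ≠ 0) |>.mp hc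
    have p22 : u 2 * v 2 = 0 := by
      have hc : (u 2 * v 2) ^ 3 = 0 := by linear_combination ((1/18 : ℂ) * u 2 * u 2 * v 2 * v 2 + (35/18 : ℂ) * u 2 * u 2 * v 1 * v 2 + (7/6 : ℂ) * u 2 * u 2 * v 0 * v 2) * h0 + ((-1/2 : ℂ) * u 2 * u 2 * v 2 * v 2 + (-4/9 : ℂ) * u 2 * u 2 * v 1 * v 2 + (35/18 : ℂ) * u 2 * u 2 * v 1 * v 1 + (-1/6 : ℂ) * u 2 * u 2 * v 0 * v 2 + (-7/18 : ℂ) * u 2 * u 2 * v 0 * v 1 + (-7/9 : ℂ) * u 2 * u 2 * v 0 * v 0) * h1 + ((-1/2 : ℂ) * u 2 * u 2 * v 2 * v 2 + (7/18 : ℂ) * u 2 * u 2 * v 0 * v 2 + u 1 * u 2 * v 2 * v 2 + (35/18 : ℂ) * u 1 * u 2 * v 1 * v 2) * h2 + ((-5/18 : ℂ) * u 2 * u 2 * v 2 * v 2 + (-7/18 : ℂ) * u 2 * u 2 * v 0 * v 2) * h3 + ((1/2 : ℂ) * u 2 * u 2 * v 2 * v 2 + (-7/18 : ℂ) * u 2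 * u 2 * v 0 * v 2) * h4
      exact pow_eq_zero_iff (by norm_num : (3:ℕ) ≠ 0) |>.mp hc
    funext x
    obtain ⟨i, j⟩ := x
    fin_cases i <;> fin_cases j
    · exact p00
    · exact p01
    · exact p02
    · exact p10
    · exact p11
    · exact p12
    · exact p20
    · exact p21
    · exact p22

end
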